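/- An n-by-n real matrix Q can be written as Q = AB with A and B symmetric positive definite if and only if Q is diagonalizable with all eigenvalues positive. -/

import Mathlib

open Matrix

private lemma posDef_conj_aux {n : Type*} [Fintype n] [DecidableEq n]
    {M N : Matrix n n ℝ} (hM : M.PosDef) (hN : IsUnit N) : (Nᴴ * M * N).PosDef := by
  refine posDef_iff_dotProduct_mulVec.mpr ⟨isHermitian_conjTranspose_mul_mul N hM.1, fun x hx => ?_⟩
  have hNx : N *ᵥ x ≠ 0 :=
    (Matrix.mulVec_injective_iff_isUnit.mpr hN).ne_iff' (by simp) |>.2 hx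
  have key : star x ⬝ᵥ ((Nᴴ * M * N) *ᵥ x) = star (N *ᵥ x) ⬝ᵥ (M *ᵥ (N *ᵥ x)) := by
    rw [star_mulVec, ← mulVec_mulVec, ← mulVec_mulVec, Matrix.dotProduct_mulVec]
  rw [key]
  exact hM.dotProduct_mulVec_pos hNx

/-- A real matrix factors as a product of two symmetric positive definite matrices
if and only if it is diagonalizable with all eigenvalues positive (quasi-positive). -/
theorem posDef_factorization_iff_quasiPositive {n : Type*} [Fintype n] [DecidableEq n]
    (Q : Matrix n n ℝ) :
    (∃ A B : Matrix n n ℝ, A.PosDef ∧ B.PosDef ∧ Q = A * B) ↔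
    (∃ (S : Matrix n n ℝ) (d : n → ℝ), IsUnit S ∧ (∀ i, 0 < d i) ∧
      Q = S * Matrix.diagonal d * S⁻¹) := by
  constructor
  · rintro ⟨A, B, hA, hB, rfl⟩
    open scoped MatrixOrder in set R := CFC.sqrt A with hRdef
    have hRps : R.PosSemidef := open scoped MatrixOrder in (CFC.sqrt_nonneg A).posSemidef
    have hRR : R * R = A := open scoped MatrixOrder in CFC.sqrt_mul_sqrt_self A hA.posSemidef.nonneg
    have hRu : IsUnit R := by
      rw [isUnit_iff_isUnit_det]
      have h2 : R.det * R.det = A.det := by rw [← det_mul, hRR]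
      have := hA.det_pos
      exact (isUnit_iff_ne_zero.mpr (fun h => by simp [h, ← h2] at this))
    have hRH : Rᴴ = R := hRps.1
    have hM : (Rᴴ * B * R).PosDef := posDef_conj_aux hB hRu
    have hMH := hM.1
    set U : Matrix n n ℝ := (hMH.eigenvectorUnitary : Matrix n n ℝ) with hUdef
    have hUu : IsUnit U := ⟨⟨U, star U, (mem_unitaryGroup_iff).mp hMH.eigenvectorUnitary.2,
      (mem_unitaryGroup_iff').mp hMH.eigenvectorUnitary.2⟩, rfl⟩
    have hUinv : U⁻¹ = star U := inv_eq_left_inv ((mem_unitaryGroup_iff').mp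
      hMH.eigenvectorUnitary.2)
    refine ⟨R * U, hMH.eigenvalues, hRu.mul hUu, hM.eigenvalues_pos, ?_⟩
    have hspec : Rᴴ * B * R = U * Matrix.diagonal hMH.eigenvalues * star U := by
      have := hMH.spectral_theorem
      rw [Unitary.conjStarAlgAut_apply] at this
      exact this
    have hSinv : (R * U)⁻¹ = star U * R⁻¹ := by rw [Matrix.mul_inv_rev, hUinv]
    have hRinv : R * R⁻¹ = 1 := Matrix.mul_nonsing_inv _ ((isUnit_iff_isUnit_det R).mp hRu)
    calc A * B = R * (Rᴴ * B * R) * R⁻¹ := by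
          rw [hRH]
          rw [← hRR]
          rw [show R * (R * B * R) * R⁻¹ = R * R * B * (R * R⁻¹) by simp only [Matrix.mul_assoc], hRinv, mul_one]
      _ = (R * U) * Matrix.diagonal hMH.eigenvalues * (R * U)⁻¹ := by
          rw [hSinv]
          conv_lhs => rw [hspec]
          simp only [Matrix.mul_assoc]
  · rintro ⟨S, d, hS, hd, rfl⟩
    have hSd : IsUnit S.det := (isUnit_iff_isUnit_det S).mp hS
    have hSinv : IsUnit S⁻¹ := isUnit_nonsing_inv_iff.mpr hS
    have hSH : IsUnit Sᴴ := by
      rw [isUnit_iff_isUnit_det, det_conjTranspose]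
      exact hSd.star
    refine ⟨S * Sᴴ, (S⁻¹)ᴴ * Matrix.diagonal d * S⁻¹, ?_, ?_, ?_⟩
    · have := posDef_conj_aux (Matrix.PosDef.one (n := n) (R := ℝ)) hSH
      simpa using this
    · exact posDef_conj_aux (Matrix.PosDef.diagonal hd) hSinv
    · have h1 : Sᴴ * (S⁻¹)ᴴ = 1 := by
        rw [← conjTranspose_mul, Matrix.nonsing_inv_mul _ hSd, conjTranspose_one]
      calc S * Matrix.diagonal d * S⁻¹
          = S * (Sᴴ * (S⁻¹)ᴴ) * Matrix.diagonal d * S⁻¹ := by rw [h1, mul_one]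
        _ = (S * Sᴴ) * ((S⁻¹)ᴴ * Matrix.diagonal d * S⁻¹) := by simp only [Matrix.mul_assoc]
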